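/- Let D be a subset of a finite group G. Then D is a left difference set if and only if D is a right difference set, i.e., every non-identity element of G occurs exactly λ times as x⁻¹y with x,y ∈ D if and only if every non-identity element occurs exactly λ times as yx⁻¹ with x,y ∈ D. -/

import Mathlib

open Finset MonoidAlgebra

namespace Stmt13Aux

instance {G : Type*} [Group G] [Fintype G] : Module.Finite ℚ (MonoidAlgebra ℚ G) :=
  inferInstance

theorem mul_eq_one_comm' {R : Type*} [Ring R] [Algebra ℚ R]
    [FiniteDimensional ℚ R] {a b : R} (h : a * b = 1) : b * a = 1 := by
  have h1 : LinearMap.mulLeft ℚ a * LinearMap.mulLeft ℚ b = 1 := by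
    rw [Module.End.mul_eq_comp, ← LinearMap.mulLeft_mul, h, LinearMap.mulLeft_one,
      Module.End.one_eq_id]
  have h2 := mul_eq_one_comm.mp h1
  have h3 := DFunLike.congr_fun h2 (1 : R)
  simpa [Module.End.mul_eq_comp] using h3

theorem core {R : Type*} [Ring R] [Algebra ℚ R] [FiniteDimensional ℚ R]
    {a b c d : R} (hc : ∀ x, c * x = x * c) (hcd : c * d = 1) (h : b * a = c) :
    a * b = c := by
  have hdc : d * c = 1 := mul_eq_one_comm' hcd
  have h1 : (d * b) * a = 1 := by rw [mul_assoc, h, hdc]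
  have h2 : a * (d * b) = 1 := mul_eq_one_comm' h1
  have hb : (d * b) * c = b := by rw [mul_assoc, ← hc b, ← mul_assoc, hdc, one_mul]
  calc a * b = a * ((d * b) * c) := by rw [hb]
    _ = (a * (d * b)) * c := (mul_assoc a (d * b) c).symm
    _ = c := by rw [h2, one_mul]

variable {G : Type*} [Group G] [Fintype G] [DecidableEq G]

noncomputable def indA (D : Finset G) : MonoidAlgebra ℚ G := ∑ d ∈ D, single d 1

noncomputable def indB (D : Finset G) : MonoidAlgebra ℚ G := ∑ d ∈ D, single d⁻¹ 1

noncomputable def allS (G : Type*) [Group G] [Fintype G] : MonoidAlgebra ℚ G :=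
  ∑ g : G, single g 1

theorem indB_mul_indA (D : Finset G) (g : G) :
    (indB D * indA D).coeff g = (((D ×ˢ D).filter (fun p => p.1⁻¹ * p.2 = g)).card : ℚ) := by
  rw [indB, indA, Finset.sum_mul_sum]
  simp only [single_mul_single, one_mul]
  rw [Finset.card_filter]
  push_cast
  rw [Finset.sum_product, coeff_sum, Finset.sum_apply']
  refine Finset.sum_congr rfl fun x hx => ?_
  rw [coeff_sum, Finset.sum_apply']
  refine Finset.sum_congr rfl fun y hy => ?_
  simp [coeff_single, Finsupp.single_apply]

theorem indA_mul_indB (D : Finset G) (g : G) :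
    (indA D * indB D).coeff g = (((D ×ˢ D).filter (fun p => p.2 * p.1⁻¹ = g)).card : ℚ) := by
  rw [indB, indA, Finset.sum_mul_sum]
  simp only [single_mul_single, one_mul]
  rw [Finset.card_filter]
  push_cast
  rw [Finset.sum_product, Finset.sum_comm, coeff_sum, Finset.sum_apply']
  refine Finset.sum_congr rfl fun x hx => ?_
  rw [coeff_sum, Finset.sum_apply']
  refine Finset.sum_congr rfl fun y hy => ?_
  simp [coeff_single, Finsupp.single_apply]

theorem allS_apply (g : G) : (allS G).coeff g = 1 := by
  rw [allS, coeff_sum, Finset.sum_apply']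
  simp [coeff_single, Finsupp.single_apply]

theorem single_mul_allS (h : G) (q : ℚ) : single h q * allS G = q • allS G := by
  rw [allS, Finset.mul_sum, Finset.smul_sum]
  rw [Fintype.sum_equiv (Equiv.mulLeft h) _ (fun g => q • single g (1:ℚ))]
  intro g
  simp [single_mul_single, Finsupp.smul_single, Equiv.mulLeft]

theorem allS_mul_single (h : G) (q : ℚ) : allS G * single h q = q • allS G := by
  rw [allS, Finset.sum_mul, Finset.smul_sum]
  rw [Fintype.sum_equiv (Equiv.mulRight h) _ (fun g => q • single g (1:ℚ))]
  intro g
  simp [single_mul_single, Finsupp.smul_single, Equiv.mulRight, mul_comm]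

theorem mul_allS_comm (r : MonoidAlgebra ℚ G) : r * allS G = allS G * r := by
  conv_lhs => rw [← sum_coeff_single r]
  conv_rhs => rw [← sum_coeff_single r]
  rw [Finsupp.sum, Finset.sum_mul, Finset.mul_sum]
  refine Finset.sum_congr rfl fun h _ => ?_
  rw [single_mul_allS, allS_mul_single]

theorem allS_sq : allS G * allS G = (Fintype.card G : ℚ) • allS G := by
  nth_rewrite 2 [allS]
  rw [Finset.mul_sum]
  simp only [allS_mul_single, one_smul]
  rw [Finset.sum_const, card_univ]
  exact (Nat.cast_smul_eq_nsmul ℚ _ _).symm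

/-- transfer: left counts of `D⁻¹` are right counts of `D`. -/
theorem transferL (D : Finset G) (g : G) :
    (((D.image (·⁻¹) ×ˢ D.image (·⁻¹)).filter (fun p => p.1⁻¹ * p.2 = g)).card) =
      ((D ×ˢ D).filter (fun p => p.2 * p.1⁻¹ = g)).card := by
  apply Finset.card_nbij (i := fun p => (p.2⁻¹, p.1⁻¹))
  · intro p hp
    simp only [mem_coe, mem_filter, mem_product, mem_image] at hp ⊢
    obtain ⟨⟨⟨a, ha, hae⟩, ⟨b, hb, hbe⟩⟩, hc⟩ := hp
    refine ⟨⟨?_, ?_⟩, ?_⟩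
    · rw [← hbe, inv_inv]; exact hb
    · rw [← hae, inv_inv]; exact ha
    · simpa using hc
  · intro p hp q hq hpq
    simp only [Prod.mk.injEq, inv_inj] at hpq
    exact Prod.ext hpq.2 hpq.1
  · intro p hp
    simp only [mem_coe, mem_filter, mem_product] at hp
    refine ⟨(p.2⁻¹, p.1⁻¹), ?_, by simp⟩
    simp only [mem_coe, mem_filter, mem_product, mem_image]
    refine ⟨⟨⟨p.2, hp.1.2, rfl⟩, ⟨p.1, hp.1.1, rfl⟩⟩, ?_⟩
    simpa using hp.2

/-- transfer: right counts of `D⁻¹` are left counts of `D`. -/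
theorem transferR (D : Finset G) (g : G) :
    (((D.image (·⁻¹) ×ˢ D.image (·⁻¹)).filter (fun p => p.2 * p.1⁻¹ = g)).card) =
      ((D ×ˢ D).filter (fun p => p.1⁻¹ * p.2 = g)).card := by
  apply Finset.card_nbij (i := fun p => (p.2⁻¹, p.1⁻¹))
  · intro p hp
    simp only [mem_coe, mem_filter, mem_product, mem_image] at hp ⊢
    obtain ⟨⟨⟨a, ha, hae⟩, ⟨b, hb, hbe⟩⟩, hc⟩ := hp
    refine ⟨⟨?_, ?_⟩, ?_⟩
    · rw [← hbe, inv_inv]; exact hb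
    · rw [← hae, inv_inv]; exact ha
    · simpa using hc
  · intro p hp q hq hpq
    simp only [Prod.mk.injEq, inv_inj] at hpq
    exact Prod.ext hpq.2 hpq.1
  · intro p hp
    simp only [mem_coe, mem_filter, mem_product] at hp
    refine ⟨(p.2⁻¹, p.1⁻¹), ?_, by simp⟩
    simp only [mem_coe, mem_filter, mem_product, mem_image]
    refine ⟨⟨⟨p.2, hp.1.2, rfl⟩, ⟨p.1, hp.1.1, rfl⟩⟩, ?_⟩
    simpa using hp.2

theorem combo_mul (a b p q : ℚ) :
    ((a • (1 : MonoidAlgebra ℚ G) + b • allS G) * (p • 1 + q • allS G)) =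
      (a * p) • (1 : MonoidAlgebra ℚ G)
        + (a * q + b * p + b * q * (Fintype.card G : ℚ)) • allS G := by
  rw [add_mul, mul_add, mul_add]
  simp only [smul_mul_smul_comm, one_mul, mul_one]
  rw [allS_sq, smul_smul]
  module

theorem half (D : Finset G) (l : ℕ)
    (HL : ∀ g : G, g ≠ 1 → ((D ×ˢ D).filter (fun p => p.1⁻¹ * p.2 = g)).card = l)
    (g : G) (hg : g ≠ 1) :
    ((D ×ˢ D).filter (fun p => p.2 * p.1⁻¹ = g)).card = l := by
  set v := Fintype.card G with hv
  set k := D.card with hk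
  have hv1 : 1 ≤ v := Fintype.card_pos
  -- fiber over 1
  have hL1 : ((D ×ˢ D).filter (fun p => p.1⁻¹ * p.2 = 1)).card = k := by
    have hdiag : (D ×ˢ D).filter (fun p => p.1⁻¹ * p.2 = 1) = D.diag := by
      ext p
      simp only [mem_filter, mem_product, Finset.mem_diag, inv_mul_eq_one]
      constructor
      · rintro ⟨⟨h1, _⟩, h3⟩; exact ⟨h1, h3⟩
      · rintro ⟨h1, h2⟩; exact ⟨⟨h1, h2 ▸ h1⟩, h2⟩
    rw [hdiag, Finset.diag_card]
  -- total count
  have hsum : ∑ x : G, ((D ×ˢ D).filter (fun p => p.1⁻¹ * p.2 = x)).card = k * k := by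
    have h1 := Finset.card_eq_sum_card_fiberwise
      (s := D ×ˢ D) (t := univ) (f := fun p => p.1⁻¹ * p.2) (fun a _ => mem_univ _)
    rw [Finset.card_product] at h1
    exact h1.symm
  have hcount : (k : ℚ) * k = k + ((v : ℚ) - 1) * l := by
    have hsplit : ∑ x : G, ((D ×ˢ D).filter (fun p => p.1⁻¹ * p.2 = x)).card
        = k + (v - 1) * l := by
      rw [← Finset.sum_filter_add_sum_filter_not univ (· = 1)]
      have e1 : univ.filter (fun x : G => x = 1) = {1} := by
        ext x; simp
      have e2 : univ.filter (fun x : G => ¬ x = 1) = univ.erase 1 := by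
        ext x; simp [and_comm]
      rw [e1, e2, Finset.sum_singleton, hL1]
      congr 1
      rw [Finset.sum_congr rfl (fun x hx => HL x (Finset.mem_erase.mp hx).1),
        Finset.sum_const, Finset.card_erase_of_mem (mem_univ _), card_univ, smul_eq_mul]
    rw [hsplit] at hsum
    have hq := congrArg (Nat.cast : ℕ → ℚ) hsum
    push_cast [Nat.cast_sub hv1] at hq
    linarith
  by_cases hk0 : k = 0
  · have hD : D = ∅ := Finset.card_eq_zero.mp hk0
    have h0 := HL g hg
    simp only [hD] at h0 ⊢
    simpa using h0.symm ▸ (by simp : ((∅ ×ˢ (∅ : Finset G)).filter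
      (fun p => p.2 * p.1⁻¹ = g)).card = 0)
  by_cases hkl : k = l
  · -- then k = v and D = univ
    have hkv : k = v := by
      have h1 : (k : ℚ) * k = v * k := by rw [hcount, hkl]; ring
      have h2 : (k : ℚ) ≠ 0 := Nat.cast_ne_zero.mpr hk0
      have := mul_right_cancel₀ h2 h1
      exact_mod_cast this
    have hD : D = univ := Finset.eq_univ_of_card D (hk ▸ hkv)
    have hcard : ((D ×ˢ D).filter (fun p => p.2 * p.1⁻¹ = g)).card = v := by
      rw [hD]
      have himg : (univ ×ˢ univ).filter (fun p : G × G => p.2 * p.1⁻¹ = g)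
          = univ.image (fun x => (x, g * x)) := by
        ext p
        simp only [mem_filter, mem_product, mem_univ, true_and, mem_image]
        constructor
        · intro hp
          exact ⟨p.1, by rw [← hp]; simp [Prod.ext_iff]⟩
        · rintro ⟨x, _, rfl⟩
          simp
      rw [himg, Finset.card_image_of_injective _ (fun x y hxy => (Prod.ext_iff.mp hxy).1),
        card_univ]
    rw [hcard, ← hkv, hkl]
  -- main case: group algebra argument
  · have hkQ : (k : ℚ) ≠ 0 := Nat.cast_ne_zero.mpr hk0
    have haQ : (k : ℚ) - l ≠ 0 := by
      intro h
      exact hkl (by exact_mod_cast sub_eq_zero.mp h)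
    have hk2 : (k : ℚ) - l + l * v = k * k := by rw [hcount]; ring
    have hk2' : (k : ℚ) * k ≠ 0 := mul_ne_zero hkQ hkQ
    set c : MonoidAlgebra ℚ G := ((k : ℚ) - l) • 1 + (l : ℚ) • allS G with hc
    have hBA : indB D * indA D = c := by
      refine MonoidAlgebra.ext (Finsupp.ext fun x => ?_)
      rw [indB_mul_indA, hc, coeff_add, coeff_smul, coeff_smul, Finsupp.add_apply, Finsupp.smul_apply, Finsupp.smul_apply,
        allS_apply, MonoidAlgebra.one_def, coeff_single, Finsupp.single_apply]
      by_cases hx : x = 1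
      · rw [hx, hL1]
        simp
      · rw [HL x hx]
        simp [Ne.symm hx]
    set d : MonoidAlgebra ℚ G := ((k : ℚ) - l)⁻¹ • 1
      + (-(l / (((k : ℚ) - l) * (k * k)))) • allS G with hd
    have hcd : c * d = 1 := by
      rw [hc, hd, combo_mul, ← hv]
      have e1 : (((k : ℚ) - l) * ((k : ℚ) - l)⁻¹) = 1 := mul_inv_cancel₀ haQ
      have e2 : ((k : ℚ) - l) * -((l : ℚ) / (((k : ℚ) - l) * (k * k)))
          + (l : ℚ) * ((k : ℚ) - l)⁻¹
          + (l : ℚ) * -((l : ℚ) / (((k : ℚ) - l) * (k * k))) * v = 0 := by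
        field_simp
        linear_combination (-(l:ℚ)) * hk2
      rw [e1, e2, one_smul, zero_smul, add_zero]
    have hccomm : ∀ x, c * x = x * c := by
      intro x
      rw [hc, add_mul, mul_add, smul_mul_assoc, mul_smul_comm, one_mul, mul_one,
        smul_mul_assoc, mul_smul_comm, mul_allS_comm]
    have hAB : indA D * indB D = c := core hccomm hcd hBA
    have hcoef : (indA D * indB D).coeff g = c.coeff g := by rw [hAB]
    rw [indA_mul_indB, hc, coeff_add, coeff_smul, coeff_smul, Finsupp.add_apply, Finsupp.smul_apply, Finsupp.smul_apply,
      allS_apply, MonoidAlgebra.one_def, coeff_single, Finsupp.single_apply] at hcoef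
    rw [if_neg (Ne.symm hg)] at hcoef
    simp only [smul_eq_mul, mul_zero, mul_one, zero_add] at hcoef
    exact_mod_cast hcoef

end Stmt13Aux

/-- `D` is a left difference set iff it is a right difference set: each non-identity
element has exactly `l` representations `x⁻¹y` iff exactly `l` representations `yx⁻¹`
(`x, y ∈ D`). -/
theorem stmt13 {G : Type*} [Group G] [Fintype G] [DecidableEq G]
    (D : Finset G) (l : ℕ) :
    (∀ g : G, g ≠ 1 → ((D ×ˢ D).filter (fun p => p.1⁻¹ * p.2 = g)).card = l) ↔
      (∀ g : G, g ≠ 1 → ((D ×ˢ D).filter (fun p => p.2 * p.1⁻¹ = g)).card = l) := by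
  constructor
  · intro HL
    exact Stmt13Aux.half D l HL
  · intro HR
    intro g hg
    rw [← Stmt13Aux.transferR D g]
    refine Stmt13Aux.half (D.image (·⁻¹)) l ?_ g hg
    intro x hx
    rw [Stmt13Aux.transferL D x]
    exact HR x hx
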